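/- arXiv:1102.4085 — 2 statements merged into one kernel-verified Lean document; each statement's English description precedes it below -/
import Mathlib

section
/- Fix θ > 0 and an integer m ≥ 2. The function f(x₁,...,x_{m−1}) = (1/θ)·((1+θ)/∏_{s=1}^{m−1}(1+θx_s) − 1), defined on the nonnegative orthant, satisfies: for every t ∈ {1,...,m−1} and all x₁,...,x_{m−1} ≥ 0, f(x₁,...,x_{m−1}) ≥ −Σ_{s≠t} x_s − (1/(1+θ))·(x_t − 1). That is, f lies above each of the tangent hyperplanes at the points with a single coordinate equal to 1 and the rest 0. -/
open MeasureTheory ProbabilityTheory Real Filter Set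

theorem stmt7 (θ : ℝ) (hθ : 0 < θ) (m : ℕ) (hm : 2 ≤ m) (x : Fin (m-1) → ℝ)
    (hx : ∀ s, 0 ≤ x s) (t : Fin (m-1)) :
    (1/θ) * ((1 + θ) / (∏ s, (1 + θ * x s)) - 1) ≥
      -(∑ s ∈ Finset.univ.erase t, x s) - (1/(1+θ)) * (x t - 1) := by
  have hθ1 : (0:ℝ) < 1 + θ := by linarith
  have hone : ∀ s, (1:ℝ) ≤ 1 + θ * x s := by
    intro s; nlinarith [hx s]
  set A := ∏ s ∈ Finset.univ.erase t, (1 + θ * x s) with hAdef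
  set S := ∑ s ∈ Finset.univ.erase t, x s with hSdef
  have hprod : ∏ s, (1 + θ * x s) = A * (1 + θ * x t) := by
    rw [hAdef, Finset.prod_erase_mul _ _ (Finset.mem_univ t)]
  have hA1 : (1:ℝ) ≤ A := by
    rw [hAdef]
    calc (1:ℝ) = ∏ s ∈ Finset.univ.erase t, 1 := by simp
    _ ≤ _ := Finset.prod_le_prod (fun s _ => zero_le_one) (fun s _ => hone s)
  have hApos : (0:ℝ) < A := lt_of_lt_of_le one_pos hA1
  have hb : (1:ℝ) ≤ 1 + θ * x t := hone t
  have hbpos : (0:ℝ) < 1 + θ * x t := lt_of_lt_of_le one_pos hb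
  set c := (1 + θ * x t) / (1 + θ) with hcdef
  have hc : 0 < c := by positivity
  have hlogA : Real.log A ≤ θ * S := by
    rw [hAdef, Real.log_prod (fun s _ => by have := hone s; linarith), hSdef, Finset.mul_sum]
    apply Finset.sum_le_sum
    intro s _
    have := Real.log_le_sub_one_of_pos (x := 1 + θ * x s) (by have := hone s; linarith)
    linarith
  have key : 1/(A*c) + Real.log A + c ≥ 2 := by
    have h1 := Real.log_le_sub_one_of_pos (x := 1/(A*c)) (by positivity)
    have h2 := Real.log_le_sub_one_of_pos hc
    have h3 : Real.log (1/(A*c)) = -Real.log A - Real.log c := by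
      rw [one_div, Real.log_inv, Real.log_mul (ne_of_gt hApos) (ne_of_gt hc)]
      ring
    rw [h3] at h1
    linarith
  have hcd : 1/(A*c) = (1+θ)/(A*(1+θ*x t)) := by
    rw [hcdef]
    field_simp
  have main : (1+θ)/(A*(1+θ*x t)) ≥ 2 - θ*S - c := by
    rw [← hcd]; linarith
  rw [hprod]
  have hstep : (1/θ) * ((1 + θ) / (A * (1 + θ * x t)) - 1) ≥ (1/θ) * (1 - θ*S - c) := by
    apply mul_le_mul_of_nonneg_left _ (by positivity)
    linarith
  have heq : (1/θ) * (1 - θ*S - c) = -S - (1/(1+θ)) * (x t - 1) := by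
    rw [hcdef]
    field_simp
    ring
  linarith
end

section
/- Let γ₁, γ₂ be independent exponential random variables with rates 1/μ₁, 1/μ₂ (means μ₁, μ₂), and let a, b be reals with b > 0 and a + b > 0. Define X = a·max{γ₁,γ₂} + b·(γ₁+γ₂). Then for x ≥ 0, Pr[X > x] = e^{−xτ₁}·(cτ₂)/(cτ₁+cτ₂−τ₁) + e^{−xτ₂}·(cτ₁)/(cτ₁+cτ₂−τ₂) + e^{−cx(τ₁+τ₂)}·τ₁τ₂(1−2c)/((cτ₁+cτ₂−τ₁)(cτ₁+cτ₂−τ₂)), where τ_k = 1/((a+b)μ_k) and c = (a+b)/(a+2b), provided the denominators are nonzero. -/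
open MeasureTheory ProbabilityTheory Real Filter Set

lemma exp_intervalIntegral (k m p q : ℝ) (hk : k ≠ 0) :
    ∫ t in p..q, Real.exp (k*t+m) = (Real.exp (k*q+m) - Real.exp (k*p+m))/k := by
  have h : ∀ t : ℝ, HasDerivAt (fun t => Real.exp (k*t+m)/k) (Real.exp (k*t+m)) t := by
    intro t
    have h1 : HasDerivAt (fun t : ℝ => k*t+m) k t := by
      simpa using ((hasDerivAt_id t).const_mul k).add_const m
    have := (h1.exp).div_const k
    rwa [mul_div_cancel_right₀ _ hk] at this
  rw [intervalIntegral.integral_eq_sub_of_hasDerivAt (fun t _ => h t)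
    ((Real.continuous_exp.comp (by continuity)).intervalIntegrable p q)]
  ring

lemma exp_tail_integral {r : ℝ} (hr : 0 < r) (p : ℝ) :
    ∫ u in Ioi p, Real.exp (-(r*u)) = Real.exp (-(r*p))/r := by
  have := integral_comp_mul_left_Ioi (fun y => Real.exp (-y)) p hr
  simp only [smul_eq_mul] at this
  rw [this, integral_exp_neg_Ioi]
  ring

lemma map_eq_expMeasure {Ω : Type*} [MeasurableSpace Ω] (μ : Measure Ω) [IsProbabilityMeasure μ]
    (γ : Ω → ℝ) (hm : Measurable γ) (hnn : ∀ ω, 0 ≤ γ ω) (m : ℝ) (hμm : 0 < m)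
    (hcdf : ∀ x : ℝ, 0 ≤ x → (μ {ω | γ ω ≤ x}).toReal = 1 - Real.exp (-x/m)) :
    Measure.map γ μ = ProbabilityTheory.expMeasure (1/m) := by
  haveI := ProbabilityTheory.isProbabilityMeasure_expMeasure (r := 1/m) (by positivity)
  refine MeasureTheory.Measure.ext_of_Iic _ _ (fun t => ?_)
  rw [Measure.map_apply hm measurableSet_Iic]
  have hexp : expMeasure (1/m) (Iic t)
      = ENNReal.ofReal (if 0 ≤ t then 1 - Real.exp (-(1/m*t)) else 0) := by
    rw [expMeasure, gammaMeasure, withDensity_apply _ measurableSet_Iic]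
    exact ProbabilityTheory.lintegral_exponentialPDF_eq_antiDeriv (by positivity) t
  rw [hexp]
  by_cases ht : 0 ≤ t
  · rw [if_pos ht]
    have hset : γ ⁻¹' (Iic t) = {ω | γ ω ≤ t} := rfl
    rw [hset, ← ENNReal.ofReal_toReal (measure_ne_top μ _), hcdf t ht]
    congr 1
    rw [neg_div]
    congr 2
    field_simp
  · rw [if_neg ht]
    have : γ ⁻¹' (Iic t) = ∅ := by
      ext ω; simp only [mem_preimage, mem_Iic, mem_empty_iff_false, iff_false]
      intro h; exact ht (le_trans (hnn ω) h)
    simp [this]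

lemma expMeasure_Ioi {r : ℝ} (hr : 0 < r) (t : ℝ) :
    ProbabilityTheory.expMeasure r (Ioi t) = ENNReal.ofReal (Real.exp (-(r * max t 0))) := by
  haveI := ProbabilityTheory.isProbabilityMeasure_expMeasure hr
  have hIic : expMeasure r (Iic t)
      = ENNReal.ofReal (if 0 ≤ t then 1 - Real.exp (-(r*t)) else 0) := by
    rw [expMeasure, gammaMeasure, withDensity_apply _ measurableSet_Iic]
    exact ProbabilityTheory.lintegral_exponentialPDF_eq_antiDeriv hr t
  have : Ioi t = (Iic t)ᶜ := by simp
  rw [this, prob_compl_eq_one_sub measurableSet_Iic, hIic]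
  by_cases ht : 0 ≤ t
  · rw [if_pos ht, max_eq_left ht]
    have he : Real.exp (-(r*t)) ≤ 1 := Real.exp_le_one_iff.2 (by nlinarith)
    rw [← ENNReal.ofReal_one, ← ENNReal.ofReal_sub _ (by linarith)]
    norm_num
  · rw [if_neg ht, max_eq_right (le_of_not_ge ht)]
    simp

set_option maxHeartbeats 4000000 in
theorem stmt8 {Ω : Type*} [MeasurableSpace Ω] (μ : Measure Ω) [IsProbabilityMeasure μ]
    (γ₁ γ₂ : Ω → ℝ) (hm₁ : Measurable γ₁) (hm₂ : Measurable γ₂)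
    (hindep : IndepFun γ₁ γ₂ μ)
    (hnn₁ : ∀ ω, 0 ≤ γ₁ ω) (hnn₂ : ∀ ω, 0 ≤ γ₂ ω)
    (μ₁ μ₂ : ℝ) (hμ₁ : 0 < μ₁) (hμ₂ : 0 < μ₂)
    (hcdf₁ : ∀ x : ℝ, 0 ≤ x → (μ {ω | γ₁ ω ≤ x}).toReal = 1 - Real.exp (-x/μ₁))
    (hcdf₂ : ∀ x : ℝ, 0 ≤ x → (μ {ω | γ₂ ω ≤ x}).toReal = 1 - Real.exp (-x/μ₂))
    (a b : ℝ) (hb : 0 < b) (hab : 0 < a + b)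
    (τ₁ τ₂ c : ℝ) (hτ₁ : τ₁ = 1/((a+b)*μ₁)) (hτ₂ : τ₂ = 1/((a+b)*μ₂))
    (hc : c = (a+b)/(a+2*b))
    (hden₁ : c*τ₁ + c*τ₂ - τ₁ ≠ 0) (hden₂ : c*τ₁ + c*τ₂ - τ₂ ≠ 0)
    (x : ℝ) (hx : 0 ≤ x) :
    (μ {ω | x < a * max (γ₁ ω) (γ₂ ω) + b * (γ₁ ω + γ₂ ω)}).toReal =
      Real.exp (-x*τ₁) * (c*τ₂) / (c*τ₁ + c*τ₂ - τ₁)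
      + Real.exp (-x*τ₂) * (c*τ₁) / (c*τ₁ + c*τ₂ - τ₂)
      + Real.exp (-c*x*(τ₁+τ₂)) * (τ₁*τ₂*(1-2*c)) /
          ((c*τ₁ + c*τ₂ - τ₁) * (c*τ₁ + c*τ₂ - τ₂)) := by
  have hab2 : 0 < a + 2*b := by linarith
  set l1 := 1/μ₁ with hl1
  set l2 := 1/μ₂ with hl2
  have hl1p : 0 < l1 := by positivity
  have hl2p : 0 < l2 := by positivity
  have hmap₁ : Measure.map γ₁ μ = expMeasure l1 := map_eq_expMeasure μ γ₁ hm₁ hnn₁ μ₁ hμ₁ hcdf₁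
  have hmap₂ : Measure.map γ₂ μ = expMeasure l2 := map_eq_expMeasure μ γ₂ hm₂ hnn₂ μ₂ hμ₂ hcdf₂
  haveI iP1 : IsProbabilityMeasure (expMeasure l1) :=
    ProbabilityTheory.isProbabilityMeasure_expMeasure hl1p
  haveI iP2 : IsProbabilityMeasure (expMeasure l2) :=
    ProbabilityTheory.isProbabilityMeasure_expMeasure hl2p
  set S : Set (ℝ×ℝ) := {p : ℝ×ℝ | x < a * max p.1 p.2 + b*(p.1+p.2)} with hSdef
  have hcont : Continuous fun p : ℝ×ℝ => a * max p.1 p.2 + b*(p.1+p.2) := by continuity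
  have hmeasS : MeasurableSet S := measurableSet_lt measurable_const hcont.measurable
  have hprod : Measure.map (fun ω => (γ₁ ω, γ₂ ω)) μ = (expMeasure l1).prod (expMeasure l2) := by
    rw [← hmap₁, ← hmap₂]
    exact (indepFun_iff_map_prod_eq_prod_map_map hm₁.aemeasurable hm₂.aemeasurable).1 hindep
  have hE : μ {ω | x < a * max (γ₁ ω) (γ₂ ω) + b * (γ₁ ω + γ₂ ω)}
      = ((expMeasure l1).prod (expMeasure l2)) S := by
    rw [← hprod, Measure.map_apply (hm₁.prodMk hm₂) hmeasS]
    rfl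
  -- sections
  set u₀ : ℝ := x/(a+2*b) with hu₀def
  set u₁ : ℝ := x/(a+b) with hu₁def
  set h : ℝ → ℝ := fun u => if u ≤ u₀ then (x - b*u)/(a+b) else (x-(a+b)*u)/b with hhdef
  have hsec : ∀ u v : ℝ, (x < a * max u v + b*(u+v)) ↔ h u < v := by
    intro u v
    by_cases hu : u ≤ u₀
    · have hux : (a+2*b)*u ≤ x := by
        rw [hu₀def] at hu
        calc (a+2*b)*u ≤ (a+2*b)*(x/(a+2*b)) := by
              exact mul_le_mul_of_nonneg_left hu hab2.le
          _ = x := by field_simp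
      simp only [hhdef, if_pos hu]
      rw [div_lt_iff₀ hab]
      constructor
      · intro hlt
        rcases le_total v u with hvu | huv
        · rw [max_eq_left hvu] at hlt
          nlinarith [mul_le_mul_of_nonneg_left hvu hb.le]
        · rw [max_eq_right huv] at hlt
          linarith
      · intro hlt
        rcases le_total v u with hvu | huv
        · rw [max_eq_left hvu]
          nlinarith [mul_le_mul_of_nonneg_left hvu hab.le]
        · rw [max_eq_right huv]
          linarith
    · have hux : x < (a+2*b)*u := by
        rw [hu₀def] at hu
        have := lt_of_not_ge hu
        calc x = (a+2*b)*(x/(a+2*b)) := by field_simp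
          _ < (a+2*b)*u := by exact mul_lt_mul_of_pos_left this hab2
      simp only [hhdef, if_neg hu]
      rw [div_lt_iff₀ hb]
      constructor
      · intro hlt
        rcases le_total v u with hvu | huv
        · rw [max_eq_left hvu] at hlt
          linarith
        · rw [max_eq_right huv] at hlt
          nlinarith [mul_le_mul_of_nonneg_left huv hb.le]
      · intro hlt
        rcases le_total v u with hvu | huv
        · rw [max_eq_left hvu]
          linarith
        · rw [max_eq_right huv]
          nlinarith [mul_le_mul_of_nonneg_left huv hab.le]
  set f : ℝ → ℝ := fun u => Real.exp (-(l2 * max (h u) 0)) with hfdef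
  have hProdApply : ((expMeasure l1).prod (expMeasure l2)) S
      = ∫⁻ u, ENNReal.ofReal (f u) ∂(expMeasure l1) := by
    rw [Measure.prod_apply hmeasS]
    refine lintegral_congr fun u => ?_
    have hsecset : Prod.mk u ⁻¹' S = Ioi (h u) := by
      ext v
      simp only [mem_preimage, hSdef, mem_setOf_eq, mem_Ioi]
      exact hsec u v
    rw [hsecset, expMeasure_Ioi hl2p]
  have hhm : Measurable h := by
    refine Measurable.ite (measurableSet_le measurable_id measurable_const) ?_ ?_
    · exact ((measurable_const.sub (measurable_id.const_mul b)).div_const (a+b))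
    · exact ((measurable_const.sub (measurable_id.const_mul (a+b))).div_const b)
  have hfm : Measurable f := by
    exact (((hhm.max measurable_const).const_mul l2).neg).exp
  have hfnn : ∀ u, 0 ≤ f u := fun u => (Real.exp_pos _).le
  have hfle1 : ∀ u, f u ≤ 1 := by
    intro u
    rw [hfdef]
    refine Real.exp_le_one_iff.2 ?_
    simp only [neg_nonpos]
    positivity
  have hInt : Integrable f (expMeasure l1) := by
    refine (integrable_const (1:ℝ)).mono' hfm.aestronglyMeasurable (ae_of_all _ fun u => ?_)
    rw [Real.norm_eq_abs, abs_of_nonneg (hfnn u)]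
    exact hfle1 u
  have hToReal : (μ {ω | x < a * max (γ₁ ω) (γ₂ ω) + b * (γ₁ ω + γ₂ ω)}).toReal
      = ∫ u, f u ∂(expMeasure l1) := by
    rw [hE, hProdApply, ← ofReal_integral_eq_lintegral_ofReal hInt (ae_of_all _ hfnn),
      ENNReal.toReal_ofReal (integral_nonneg hfnn)]

  rw [hToReal]
  -- pass to Lebesgue density
  have hpdf : ∀ u : ℝ, exponentialPDFReal l1 u = if 0 ≤ u then l1 * Real.exp (-(l1*u)) else 0 := by
    intro u
    rw [exponentialPDFReal, gammaPDFReal]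
    simp only [rpow_one, Real.Gamma_one, div_one, sub_self, rpow_zero, mul_one]
  set g : ℝ → ℝ := fun u => exponentialPDFReal l1 u * f u with hgdef
  have hwd : ∫ u, f u ∂(expMeasure l1) = ∫ u, g u := by
    have h1 : expMeasure l1
        = volume.withDensity (fun u => ((exponentialPDFReal l1 u).toNNReal : ENNReal)) := rfl
    rw [h1, integral_withDensity_eq_integral_smul (measurable_exponentialPDFReal l1).real_toNNReal]
    refine integral_congr_ae (ae_of_all _ fun u => ?_)
    rw [hgdef]
    simp [NNReal.smul_def, Real.coe_toNNReal _ (exponentialPDFReal_nonneg hl1p u)]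
  have hgm : Measurable g := (measurable_exponentialPDFReal l1).mul hfm
  have hgInt : IntegrableOn g (Ioi 0) := by
    refine Integrable.mono' ((exp_neg_integrableOn_Ioi 0 hl1p).const_mul l1)
      hgm.aestronglyMeasurable (ae_of_all _ fun u => ?_)
    rw [Real.norm_eq_abs]
    simp only [hgdef]
    have h0 : 0 ≤ exponentialPDFReal l1 u := exponentialPDFReal_nonneg hl1p u
    rw [abs_of_nonneg (mul_nonneg h0 (hfnn u))]
    calc exponentialPDFReal l1 u * f u ≤ exponentialPDFReal l1 u * 1 :=
          mul_le_mul_of_nonneg_left (hfle1 u) h0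
      _ = exponentialPDFReal l1 u := mul_one _
      _ ≤ l1 * Real.exp (-l1*u) := by
          rw [hpdf u, neg_mul]
          split_ifs with hcase
          · exact le_refl _
          · positivity
  have hrestrict : ∫ u, g u = ∫ u in Ioi 0, g u := by
    rw [← integral_Ici_eq_integral_Ioi]
    refine (setIntegral_eq_integral_of_forall_compl_eq_zero fun u hu => ?_).symm
    simp only [mem_Ici, not_le] at hu
    simp only [hgdef]
    rw [hpdf u, if_neg (by linarith), zero_mul]
  have h0u₀ : (0:ℝ) ≤ u₀ := by rw [hu₀def]; positivity
  have hu₀u₁ : u₀ ≤ u₁ := by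
    rw [hu₀def, hu₁def]
    gcongr
    linarith
  have h0u₁ : (0:ℝ) ≤ u₁ := le_trans h0u₀ hu₀u₁
  have hsplit1 : ∫ u in Ioi 0, g u = (∫ u in Ioc 0 u₀, g u) + ∫ u in Ioi u₀, g u := by
    rw [← setIntegral_union (Ioc_disjoint_Ioi le_rfl) measurableSet_Ioi
      (hgInt.mono_set (Ioc_subset_Ioi_self)) (hgInt.mono_set (Ioi_subset_Ioi h0u₀)),
      Ioc_union_Ioi_eq_Ioi h0u₀]
  have hsplit2 : ∫ u in Ioi u₀, g u = (∫ u in Ioc u₀ u₁, g u) + ∫ u in Ioi u₁, g u := by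
    rw [← setIntegral_union (Ioc_disjoint_Ioi le_rfl) measurableSet_Ioi
      (hgInt.mono_set (fun y hy => lt_of_le_of_lt h0u₀ hy.1))
      (hgInt.mono_set (Ioi_subset_Ioi h0u₁)),
      Ioc_union_Ioi_eq_Ioi hu₀u₁]
  set k₁ : ℝ := l2*b/(a+b) - l1 with hk₁def
  set k₂ : ℝ := l2*(a+b)/b - l1 with hk₂def
  set m₁ : ℝ := -(l2*x/(a+b)) with hm₁def
  set m₂ : ℝ := -(l2*x/b) with hm₂def
  -- nonvanishing of k₁, k₂ from the denominators hypotheses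
  have hμ₁0 : μ₁ ≠ 0 := ne_of_gt hμ₁
  have hμ₂0 : μ₂ ≠ 0 := ne_of_gt hμ₂
  have hab0 : a + b ≠ 0 := ne_of_gt hab
  have hab20 : a + 2*b ≠ 0 := ne_of_gt hab2
  have hb0 : b ≠ 0 := ne_of_gt hb
  have hab20' : a + b*2 ≠ 0 := by linarith
  have hD₁ : c*τ₁ + c*τ₂ - τ₁ = ((a+b)*μ₁ - b*μ₂) / ((a+2*b)*(a+b)*μ₁*μ₂) := by
    rw [hτ₁, hτ₂, hc]; field_simp; ring
  have hD₂ : c*τ₁ + c*τ₂ - τ₂ = ((a+b)*μ₂ - b*μ₁) / ((a+2*b)*(a+b)*μ₁*μ₂) := by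
    rw [hτ₁, hτ₂, hc]; field_simp; ring
  have hQ₁ : (a+b)*μ₁ - b*μ₂ ≠ 0 := fun h0 => hden₁ (by rw [hD₁, h0, zero_div])
  have hQ₂ : (a+b)*μ₂ - b*μ₁ ≠ 0 := fun h0 => hden₂ (by rw [hD₂, h0, zero_div])
  have hk₁ : k₁ ≠ 0 := by
    have : k₁ = -(((a+b)*μ₂ - b*μ₁)/((a+b)*μ₁*μ₂)) := by
      rw [hk₁def, hl1, hl2]; field_simp; ring
    rw [this]
    exact neg_ne_zero.2 (div_ne_zero hQ₂ (by positivity))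
  have hk₂ : k₂ ≠ 0 := by
    have : k₂ = ((a+b)*μ₁ - b*μ₂)/(b*μ₁*μ₂) := by
      rw [hk₂def, hl1, hl2]; field_simp
    rw [this]
    exact div_ne_zero hQ₁ (by positivity)
  -- Piece 1
  have hpiece1 : ∫ u in Ioc 0 u₀, g u
      = l1 * ((Real.exp (k₁*u₀+m₁) - Real.exp (k₁*0+m₁))/k₁) := by
    have hcongr : ∀ u ∈ Ioc (0:ℝ) u₀, g u = l1 * Real.exp (k₁*u+m₁) := by
      intro u hu
      have hhu : h u = (x - b*u)/(a+b) := by simp only [hhdef]; rw [if_pos hu.2]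
      have hhnn : 0 ≤ h u := by
        rw [hhu]
        have h1 : (a+2*b)*u ≤ x := by
          calc (a+2*b)*u ≤ (a+2*b)*u₀ := mul_le_mul_of_nonneg_left hu.2 hab2.le
            _ = x := by rw [hu₀def]; field_simp
        have hbu : b*u ≤ x := by nlinarith [hu.1.le]
        apply div_nonneg _ hab.le
        linarith
      simp only [hgdef, hfdef]
      rw [hpdf u, if_pos hu.1.le, max_eq_left hhnn, hhu, mul_assoc, ← Real.exp_add]
      congr 2
      rw [hk₁def, hm₁def]
      field_simp
      ring
    rw [setIntegral_congr_fun measurableSet_Ioc hcongr, ← intervalIntegral.integral_of_le h0u₀,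
      intervalIntegral.integral_const_mul, exp_intervalIntegral _ _ _ _ hk₁]
  -- Piece 2
  have hpiece2 : ∫ u in Ioc u₀ u₁, g u
      = l1 * ((Real.exp (k₂*u₁+m₂) - Real.exp (k₂*u₀+m₂))/k₂) := by
    have hcongr : ∀ u ∈ Ioc u₀ u₁, g u = l1 * Real.exp (k₂*u+m₂) := by
      intro u hu
      have hu0 : 0 ≤ u := le_trans h0u₀ hu.1.le
      have hhu : h u = (x - (a+b)*u)/b := by simp only [hhdef]; rw [if_neg (not_le.2 hu.1)]
      have hhnn : 0 ≤ h u := by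
        rw [hhu]
        have h1 : (a+b)*u ≤ x := by
          calc (a+b)*u ≤ (a+b)*u₁ := mul_le_mul_of_nonneg_left hu.2 hab.le
            _ = x := by rw [hu₁def]; field_simp
        apply div_nonneg _ hb.le
        linarith
      simp only [hgdef, hfdef]
      rw [hpdf u, if_pos hu0, max_eq_left hhnn, hhu, mul_assoc, ← Real.exp_add]
      congr 2
      rw [hk₂def, hm₂def]
      field_simp
      ring
    rw [setIntegral_congr_fun measurableSet_Ioc hcongr, ← intervalIntegral.integral_of_le hu₀u₁,
      intervalIntegral.integral_const_mul, exp_intervalIntegral _ _ _ _ hk₂]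
  -- Piece 3
  have hpiece3 : ∫ u in Ioi u₁, g u = Real.exp (-(l1*u₁)) := by
    have hcongr : ∀ u ∈ Ioi u₁, g u = l1 * Real.exp (-(l1*u)) := by
      intro u hu
      have hu' : u₁ < u := mem_Ioi.1 hu
      have hu0 : 0 ≤ u := le_trans h0u₁ hu'.le
      have hub : ¬ u ≤ u₀ := not_le.2 (lt_of_le_of_lt hu₀u₁ hu')
      have hhu : h u = (x - (a+b)*u)/b := by simp only [hhdef]; rw [if_neg hub]
      have hhneg : h u ≤ 0 := by
        rw [hhu]
        apply div_nonpos_of_nonpos_of_nonneg _ hb.le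
        have h1 : x ≤ (a+b)*u := by
          calc x = (a+b)*u₁ := by rw [hu₁def]; field_simp
            _ ≤ (a+b)*u := mul_le_mul_of_nonneg_left hu'.le hab.le
        linarith
      simp only [hgdef, hfdef]
      rw [hpdf u, if_pos hu0, max_eq_right hhneg, mul_zero, neg_zero, Real.exp_zero, mul_one]
    rw [setIntegral_congr_fun measurableSet_Ioi hcongr, integral_const_mul,
      exp_tail_integral hl1p, mul_comm, div_mul_cancel₀ _ (ne_of_gt hl1p)]
  -- assemble
  rw [hwd, hrestrict, hsplit1, hsplit2, hpiece1, hpiece2, hpiece3]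
  -- normalize exponents
  have e1 : k₁*u₀+m₁ = -c*x*(τ₁+τ₂) := by
    rw [hk₁def, hm₁def, hu₀def, hl1, hl2, hc, hτ₁, hτ₂]; field_simp
    all_goals first
    | rfl
    | ring1
    | exact Or.inl trivial
    | exact Or.inl (by ring)
  have e2 : k₁*0+m₁ = -x*τ₂ := by
    rw [hm₁def, hl2, hτ₂]; field_simp
    all_goals first
    | rfl
    | ring1
    | exact Or.inl trivial
    | exact Or.inl (by ring)
  have e3 : k₂*u₁+m₂ = -x*τ₁ := by
    rw [hk₂def, hm₂def, hu₁def, hl1, hl2, hτ₁]; field_simp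
    all_goals first
    | rfl
    | ring1
    | exact Or.inl trivial
    | exact Or.inl (by ring)
  have e4 : k₂*u₀+m₂ = -c*x*(τ₁+τ₂) := by
    rw [hk₂def, hm₂def, hu₀def, hl1, hl2, hc, hτ₁, hτ₂]; field_simp
    all_goals first
    | rfl
    | ring1
    | exact Or.inl trivial
    | exact Or.inl (by ring)
  have e5 : -(l1*u₁) = -x*τ₁ := by
    rw [hl1, hu₁def, hτ₁]; field_simp
    all_goals first
    | rfl
    | ring1
    | exact Or.inl trivial
    | exact Or.inl (by ring)
  rw [e1, e2, e3, e4, e5]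
  have hk₁v : k₁ = -(((a+b)*μ₂ - b*μ₁)/((a+b)*μ₁*μ₂)) := by
    rw [hk₁def, hl1, hl2]; field_simp; ring
  have hk₂v : k₂ = ((a+b)*μ₁ - b*μ₂)/(b*μ₁*μ₂) := by
    rw [hk₂def, hl1, hl2]; field_simp
  set E1 := Real.exp (-x*τ₁) with hE1
  set E2 := Real.exp (-x*τ₂) with hE2
  set E3 := Real.exp (-c*x*(τ₁+τ₂)) with hE3
  have hC₂ : -(a*μ₁*μ₂) - b*μ₁*μ₂ + b*μ₁^2 ≠ 0 := by
    intro h0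
    have h1 : μ₁ * ((a+b)*μ₂ - b*μ₁) = 0 := by linear_combination -h0
    rcases mul_eq_zero.1 h1 with h2|h2
    · exact hμ₁0 h2
    · exact hQ₂ h2
  have hC₁ : -(a*μ₁*μ₂) - b*μ₁*μ₂ + b*μ₂^2 ≠ 0 := by
    intro h0
    have h1 : μ₂ * ((a+b)*μ₁ - b*μ₂) = 0 := by linear_combination -h0
    rcases mul_eq_zero.1 h1 with h2|h2
    · exact hμ₂0 h2
    · exact hQ₁ h2
  have co2 : l1/k₁ = -(c*τ₁/(c*τ₁+c*τ₂-τ₂)) := by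
    rw [← neg_div, div_eq_div_iff hk₁ hden₂, hk₁def, hl1, hl2, hτ₁, hτ₂, hc]
    field_simp
    ring1
  have co1 : l1/k₂ + 1 = c*τ₂/(c*τ₁+c*τ₂-τ₁) := by
    nth_rewrite 1 [show (1:ℝ) = k₂/k₂ from (div_self hk₂).symm]
    rw [← add_div, div_eq_div_iff hk₂ hden₁, hk₂def, hl1, hl2, hτ₁, hτ₂, hc]
    field_simp
    ring1
  have co3 : τ₁*τ₂*(1-2*c)/((c*τ₁+c*τ₂-τ₁)*(c*τ₁+c*τ₂-τ₂))
      = 1 - c*τ₁/(c*τ₁+c*τ₂-τ₂) - c*τ₂/(c*τ₁+c*τ₂-τ₁) := by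
    rw [eq_sub_iff_add_eq, eq_sub_iff_add_eq, div_add_div _ _ (mul_ne_zero hden₁ hden₂) hden₁,
      div_add_div _ _ (mul_ne_zero (mul_ne_zero hden₁ hden₂) hden₁) hden₂,
      div_eq_one_iff_eq (by positivity)]
    ring1
  linear_combination (E3 - E2) * co2 + (E1 - E3) * co1 - E3 * co3
end
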